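/- Let G be a group acting on the right on a set P, with Ω²_cl an abelian group (closed 2-forms) and suppose for each g ∈ AutP we are given a^g := g⁻¹·θ − θ ∈ Ω¹(adP) for a fixed connection θ. Then the product (g,B)(g',B') := (gg', ǧ'*B + B' + c((g'⁻¹·a^g) ∧ a^{g'})) defines a group structure on pairs {(g,B)} (where ǧ denotes the diffeomorphism covered by g), i.e. it is associative with identity (Id,0) and inverses, given the cocycle property a^{gg'} = g'⁻¹·a^g + a^{g'}. -/

import Mathlib

namespace Statement18

/-- let `G = Aut P`, let `Ω²_cl` be the abelian group of closed 2-forms with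
the (contravariant) pullback action `ρ g = ǧ*`, let `A = Ω¹(adP)` with the (contravariant)
action `R g = g⁻¹·(-)`, let `c` be the equivariant antisymmetric pairing
`c(· ∧ ·) : A × A → Ω²_cl`, and let `a : G → A`, `a^g = g⁻¹·θ − θ`, satisfy the cocycle
property `a^{gg'} = g'⁻¹·a^g + a^{g'}`.  Then the product
`(g,B)(g',B') = (gg', ǧ'*B + B' + c((g'⁻¹·a^g) ∧ a^{g'}))`
is associative, has identity `(1,0)`, and has inverses — i.e. it defines a group structure
on the set of pairs `{(g,B)}`. -/
theorem statement18
    (G : Type*) [Group G]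
    (Ω : Type*) [AddCommGroup Ω]
    (A : Type*) [AddCommGroup A]
    (ρ : G → (Ω →+ Ω))                  -- pullback action on closed 2-forms
    (hρ_one : ρ 1 = AddMonoidHom.id Ω)
    (hρ_mul : ∀ g g' (B : Ω), ρ (g * g') B = ρ g' (ρ g B))
    (R : G → (A →+ A))                  -- the action `g⁻¹ · (-)` on adP-valued 1-forms
    (hR_one : R 1 = AddMonoidHom.id A)
    (hR_mul : ∀ g g' (α : A), R (g * g') α = R g' (R g α))
    (c : A → A → Ω)                     -- the pairing `c(· ∧ ·)`
    (hc_addl : ∀ α α' β, c (α + α') β = c α β + c α' β)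
    (hc_addr : ∀ α β β', c α (β + β') = c α β + c α β')
    (hc_anti : ∀ α β, c α β = - c β α)
    (hc_equiv : ∀ g α β, ρ g (c α β) = c (R g α) (R g β))
    (a : G → A)                          -- `a^g = g⁻¹·θ − θ`
    (hcocycle : ∀ g g', a (g * g') = R g' (a g) + a g') :
    -- the product on pairs
    ∀ mul : (G × Ω) → (G × Ω) → (G × Ω),
      (∀ p q : G × Ω, mul p q = (p.1 * q.1, ρ q.1 p.2 + q.2 + c (R q.1 (a p.1)) (a q.1))) →
      -- associativity
      (∀ p q r, mul (mul p q) r = mul p (mul q r)) ∧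
      -- identity
      (∀ p, mul (1, 0) p = p ∧ mul p (1, 0) = p) ∧
      -- inverses
      (∀ p, ∃ q, mul p q = (1, 0) ∧ mul q p = (1, 0)) := by
  intro mul hmul
  have ha1 : a 1 = 0 := by
    have h := hcocycle 1 1
    simp only [hR_one, AddMonoidHom.id_apply, mul_one] at h
    exact right_eq_add.mp h
  have hc0l : ∀ β, c 0 β = 0 := by
    intro β
    have h := hc_addl 0 0 β
    rw [add_zero] at h
    exact right_eq_add.mp h
  have hc0r : ∀ α, c α 0 = 0 := by
    intro α
    have h := hc_addr α 0 0
    rw [add_zero] at h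
    exact right_eq_add.mp h
  have hc_negl : ∀ α β, c (-α) β = - c α β := by
    intro α β
    have h := hc_addl α (-α) β
    simp only [add_neg_cancel, hc0l] at h
    exact eq_neg_of_add_eq_zero_right h.symm
  have hc_negr : ∀ α β, c α (-β) = - c α β := by
    intro α β
    have h := hc_addr α β (-β)
    simp only [add_neg_cancel, hc0r] at h
    exact eq_neg_of_add_eq_zero_right h.symm
  refine ⟨?_, ?_, ?_⟩
  · -- associativity
    intro p q r
    rw [hmul, hmul, hmul, hmul]
    refine Prod.ext (by simp [mul_assoc]) ?_
    simp only [map_add, hcocycle, hc_addl, hc_addr, hc_equiv, ← hR_mul, ← hρ_mul]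
    abel
  · -- identity
    intro p
    constructor
    · rw [hmul]
      simp [ha1, hc0l]
    · rw [hmul]
      simp [ha1, hc0r, hρ_one]
  · -- inverses
    intro p
    have hRinv : ∀ g : G, R g⁻¹ (a g) = - a g⁻¹ := by
      intro g
      have h := hcocycle g g⁻¹
      simp only [mul_inv_cancel, ha1] at h
      exact eq_neg_of_add_eq_zero_left h.symm
    have hRinv' : ∀ g : G, R g (a g⁻¹) = - a g := by
      intro g
      have h := hcocycle g⁻¹ g
      simp only [inv_mul_cancel, ha1] at h
      exact eq_neg_of_add_eq_zero_left h.symm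
    refine ⟨(p.1⁻¹, - ρ p.1⁻¹ p.2 - c (R p.1⁻¹ (a p.1)) (a p.1⁻¹)), ?_, ?_⟩
    · rw [hmul]
      refine Prod.ext (by simp) ?_
      dsimp only
      abel
    · rw [hmul]
      refine Prod.ext (by simp) ?_
      simp only [map_sub, map_neg, hc_equiv, ← hρ_mul, ← hR_mul,
        inv_mul_cancel, hρ_one, hR_one, AddMonoidHom.id_apply,
        hRinv, hRinv', hc_negl, hc_negr]
      abel

end Statement18
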